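/- The soft-margin ℓ1-regularized quadratic surface SVM problem is always feasible and attains its minimum: for any finite data set {(x⁽ⁱ⁾, y⁽ⁱ⁾)} with y⁽ⁱ⁾ ∈ {−1,1}, and any λ, μ > 0, there exist (z*, c*, ξ*) minimizing (1/2)zᵀGz + λ‖Vz‖₁ + μΣᵢξᵢ subject to y⁽ⁱ⁾(zᵀr⁽ⁱ⁾ + c) ≥ 1 − ξᵢ and ξ ≥ 0. -/

import Mathlib

open Module Filter Finset

noncomputable section

variable {F : Type} [NormedAddCommGroup F] [InnerProductSpace ℝ F]

/-- objective value -/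
def fval {E : Type} [NormedAddCommGroup E] [InnerProductSpace ℝ E]
    {ι : Type} (A : E →L[ℝ] F) (J : Finset ι) (ℓ : ι → E →L[ℝ] ℝ) (β c : ι → ℝ) (x : E) : ℝ :=
  (1/2) * ‖A x‖^2 + ∑ i ∈ J, c i * max 0 (ℓ i x + β i)

lemma fval_nonneg {E : Type} [NormedAddCommGroup E] [InnerProductSpace ℝ E]
    {ι : Type} (A : E →L[ℝ] F) (J : Finset ι) (ℓ : ι → E →L[ℝ] ℝ) (β c : ι → ℝ)
    (hc : ∀ i ∈ J, 0 ≤ c i) (x : E) : 0 ≤ fval A J ℓ β c x := by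
  unfold fval
  have h1 : (0:ℝ) ≤ (1/2) * ‖A x‖^2 := by positivity
  have h2 : (0:ℝ) ≤ ∑ i ∈ J, c i * max 0 (ℓ i x + β i) :=
    Finset.sum_nonneg fun i hi => mul_nonneg (hc i hi) (le_max_left _ _)
  linarith

lemma fval_continuous {E : Type} [NormedAddCommGroup E] [InnerProductSpace ℝ E]
    {ι : Type} (A : E →L[ℝ] F) (J : Finset ι) (ℓ : ι → E →L[ℝ] ℝ) (β c : ι → ℝ) :
    Continuous (fval A J ℓ β c) := by
  unfold fval
  refine Continuous.add ?_ ?_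
  · exact continuous_const.mul ((A.continuous.norm).pow 2)
  · exact continuous_finset_sum _ fun i _ =>
      continuous_const.mul (continuous_const.max (((ℓ i).continuous).add continuous_const))

lemma fval_convexOn {E : Type} [NormedAddCommGroup E] [InnerProductSpace ℝ E]
    {ι : Type} (A : E →L[ℝ] F) (J : Finset ι) (ℓ : ι → E →L[ℝ] ℝ) (β c : ι → ℝ)
    (hc : ∀ i ∈ J, 0 ≤ c i) : ConvexOn ℝ Set.univ (fval A J ℓ β c) := by
  unfold fval
  refine ConvexOn.add ?_ ?_
  · refine ⟨convex_univ, ?_⟩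
    intro x _ y _ a b ha hb hab
    simp only [smul_eq_mul]
    have hn : ‖A (a • x + b • y)‖ ≤ a * ‖A x‖ + b * ‖A y‖ := by
      calc ‖A (a • x + b • y)‖ = ‖a • A x + b • A y‖ := by rw [map_add, map_smul, map_smul]
        _ ≤ ‖a • A x‖ + ‖b • A y‖ := norm_add_le _ _
        _ = a * ‖A x‖ + b * ‖A y‖ := by
            rw [norm_smul, norm_smul, Real.norm_eq_abs, Real.norm_eq_abs,
              abs_of_nonneg ha, abs_of_nonneg hb]
    have hsq : ‖A (a • x + b • y)‖ ^ 2 ≤ a * ‖A x‖ ^ 2 + b * ‖A y‖ ^ 2 := by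
      have h0 : (0:ℝ) ≤ ‖A (a • x + b • y)‖ := norm_nonneg _
      nlinarith [sq_nonneg (‖A x‖ - ‖A y‖), norm_nonneg (A x), norm_nonneg (A y),
        mul_nonneg ha hb]
    linarith
  · classical
    induction J using Finset.induction_on with
    | empty => simpa using convexOn_const 0 convex_univ
    | @insert i s hi ih =>
      have hci : (0:ℝ) ≤ c i := hc i (Finset.mem_insert_self _ _)
      have hrest := ih (fun j hj => hc j (Finset.mem_insert_of_mem hj))
      have haff : ConvexOn ℝ Set.univ (fun x : E => ℓ i x + β i) := by
        refine ⟨convex_univ, ?_⟩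
        intro x _ y _ a b ha hb hab
        simp only [map_add, map_smul, smul_eq_mul]
        have hβ : a * β i + b * β i = β i := by rw [← add_mul, hab, one_mul]
        linarith
      have hmax : ConvexOn ℝ Set.univ (fun x : E => max 0 (ℓ i x + β i)) := by
        have := (convexOn_const (0:ℝ) convex_univ).sup haff
        simpa [Pi.sup_def] using this
      have hterm : ConvexOn ℝ Set.univ (fun x : E => c i * max 0 (ℓ i x + β i)) := by
        simpa [smul_eq_mul] using hmax.smul hci
      have := hterm.add hrest
      simpa [Finset.sum_insert hi, Pi.add_def] using this

end

noncomputable section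
variable {F : Type} [NormedAddCommGroup F] [InnerProductSpace ℝ F]
open Module

lemma fval_attains_min (N : ℕ) :
    ∀ (E : Type) [NormedAddCommGroup E] [InnerProductSpace ℝ E]
      [FiniteDimensional ℝ E] (ι : Type) (J : Finset ι)
      (A : E →L[ℝ] F) (ℓ : ι → E →L[ℝ] ℝ) (β c : ι → ℝ),
      (∀ i ∈ J, 0 < c i) → finrank ℝ E + J.card ≤ N →
      ∃ x₀ : E, ∀ x : E, fval A J ℓ β c x₀ ≤ fval A J ℓ β c x := by
  induction N with
  | zero =>
    intro E _ _ _ ι J A ℓ β c hc hN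
    have h0 : finrank ℝ E = 0 := by omega
    have : Subsingleton E := finrank_zero_iff.mp h0
    exact ⟨0, fun x => le_of_eq (congrArg _ (Subsingleton.elim 0 x))⟩
  | succ N IH =>
    intro E _ _ _ ι J A ℓ β c hc hN
    classical
    set f := fval A J ℓ β c with hf
    have hcont : Continuous f := fval_continuous A J ℓ β c
    have hconv : ConvexOn ℝ Set.univ f := fval_convexOn A J ℓ β c (fun i hi => (hc i hi).le)
    by_cases hbd : Bornology.IsBounded {x : E | f x ≤ f 0}
    · -- bounded sublevel set: compactness
      have hclosed : IsClosed {x : E | f x ≤ f 0} := by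
        have : {x : E | f x ≤ f 0} = f ⁻¹' Set.Iic (f 0) := rfl
        rw [this]; exact IsClosed.preimage hcont isClosed_Iic
      have hcomp : IsCompact {x : E | f x ≤ f 0} :=
        Metric.isCompact_of_isClosed_isBounded hclosed hbd
      have hne : ({x : E | f x ≤ f 0}).Nonempty := ⟨0, show f 0 ≤ f 0 from le_rfl⟩
      obtain ⟨x₀, hx₀S, hmin⟩ := hcomp.exists_isMinOn hne hcont.continuousOn
      refine ⟨x₀, fun x => ?_⟩
      by_cases hx : f x ≤ f 0
      · exact isMinOn_iff.mp hmin x hx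
      · exact le_trans (isMinOn_iff.mp hmin 0 (show f 0 ≤ f 0 from le_rfl)) (le_of_not_ge hx)
    · -- unbounded sublevel set: find a recession direction
      rw [isBounded_iff_forall_norm_le] at hbd
      push_neg at hbd
      have hseq : ∀ n : ℕ, ∃ x : E, f x ≤ f 0 ∧ (n:ℝ) < ‖x‖ := by
        intro n
        obtain ⟨x, hxS, hxn⟩ := hbd n
        exact ⟨x, hxS, hxn⟩
      choose xs hxs1 hxs2 using hseq
      have hxs_pos : ∀ n, (0:ℝ) < ‖xs n‖ := fun n =>
        lt_of_le_of_lt (Nat.cast_nonneg n) (hxs2 n)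
      set u : ℕ → E := fun n => ‖xs n‖⁻¹ • xs n with hu
      have hu_sphere : ∀ n, u n ∈ Metric.sphere (0:E) 1 := by
        intro n
        rw [mem_sphere_zero_iff_norm, hu]
        simp only [norm_smul, norm_inv, norm_norm]
        exact inv_mul_cancel₀ (ne_of_gt (hxs_pos n))
      obtain ⟨v, hv_sphere, φ, hφ, hφ_tendsto⟩ :=
        (isCompact_sphere (0:E) 1).tendsto_subseq hu_sphere
      have hv_norm : ‖v‖ = 1 := mem_sphere_zero_iff_norm.mp hv_sphere
      have hv_ne : v ≠ 0 := by
        intro h; rw [h, norm_zero] at hv_norm; exact one_ne_zero hv_norm.symm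
      -- ray property
      have hray : ∀ s : ℝ, 0 ≤ s → f (s • v) ≤ f 0 := by
        intro s hs
        have hn : ∀ n : ℕ, s ≤ ‖xs n‖ → f (s • u n) ≤ f 0 := by
          intro n hsn
          set t := s / ‖xs n‖ with ht
          have ht0 : 0 ≤ t := div_nonneg hs (hxs_pos n).le
          have ht1 : t ≤ 1 := (div_le_one (hxs_pos n)).mpr hsn
          have heq : s • u n = t • xs n + (1 - t) • (0:E) := by
            rw [hu]; simp [smul_smul, ht, div_eq_mul_inv]
          have := hconv.2 (Set.mem_univ (xs n)) (Set.mem_univ (0:E)) ht0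
            (by linarith : 0 ≤ 1 - t) (by ring)
          rw [← heq] at this
          calc f (s • u n) ≤ t • f (xs n) + (1 - t) • f 0 := this
            _ ≤ t • f 0 + (1 - t) • f 0 := by
                simp only [smul_eq_mul]
                have := mul_le_mul_of_nonneg_left (hxs1 n) ht0
                linarith
            _ = f 0 := by simp only [smul_eq_mul]; ring
        have htend : Filter.Tendsto (fun k => f (s • u (φ k))) Filter.atTop (nhds (f (s • v))) :=
          (hcont.tendsto _).comp (hφ_tendsto.const_smul s)
        refine le_of_tendsto htend ?_
        filter_upwards [Filter.eventually_ge_atTop ⌈s⌉₊] with k hk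
        apply hn
        have h1 : s ≤ (⌈s⌉₊ : ℝ) := Nat.le_ceil s
        have h2 : (⌈s⌉₊:ℝ) ≤ (φ k : ℝ) := by
          exact_mod_cast le_trans hk (hφ.le_apply)
        linarith [(hxs2 (φ k))]
      -- A v = 0
      have hsum_nonneg : ∀ x : E, 0 ≤ ∑ i ∈ J, c i * max 0 (ℓ i x + β i) :=
        fun x => Finset.sum_nonneg fun i hi => mul_nonneg (hc i hi).le (le_max_left _ _)
      have hquad_le : ∀ x : E, (1/2) * ‖A x‖^2 ≤ f x := by
        intro x; rw [hf]; unfold fval; linarith [hsum_nonneg x]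
      have hAv : A v = 0 := by
        by_contra hA
        have ha : 0 < ‖A v‖ := norm_pos_iff.mpr hA
        set s := max 1 ((2 * f 0 + 1) / ‖A v‖^2) with hs
        have hs1 : (1:ℝ) ≤ s := le_max_left _ _
        have hs0 : (0:ℝ) ≤ s := by linarith
        have hb := le_trans (hquad_le (s • v)) (hray s hs0)
        have hAsv : ‖A (s • v)‖ = s * ‖A v‖ := by
          rw [map_smul, norm_smul, Real.norm_eq_abs, abs_of_nonneg hs0]
        rw [hAsv] at hb
        have hs2 : (2 * f 0 + 1) / ‖A v‖^2 ≤ s := le_max_right _ _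
        have hs3 : 2 * f 0 + 1 ≤ s * ‖A v‖^2 := by
          rw [div_le_iff₀ (by positivity)] at hs2; linarith
        nlinarith
      -- ℓ i v ≤ 0 on J
      have hlv : ∀ i ∈ J, ℓ i v ≤ 0 := by
        intro i hi
        by_contra hpos
        push_neg at hpos
        set s := max 0 ((f 0 / c i - β i + 1) / ℓ i v) with hs
        have hs0 : (0:ℝ) ≤ s := le_max_left _ _
        have hterm_le : c i * max 0 (ℓ i (s • v) + β i) ≤ f 0 := by
          have h1 : c i * max 0 (ℓ i (s • v) + β i) ≤ ∑ j ∈ J, c j * max 0 (ℓ j (s • v) + β j) :=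
            Finset.single_le_sum (f := fun j => c j * max 0 (ℓ j (s • v) + β j))
              (fun j hj => mul_nonneg (hc j hj).le (le_max_left _ _)) hi
          have h2 := hray s hs0
          rw [hf] at h2; unfold fval at h2
          have h3 : (0:ℝ) ≤ (1/2) * ‖A (s • v)‖^2 := by positivity
          rw [hf]; unfold fval
          have h4 : (0:ℝ) ≤ (1/2) * ‖A (0:E)‖^2 := by positivity
          linarith
        have hsv : ℓ i (s • v) = s * ℓ i v := by rw [map_smul]; rfl
        have hkey : c i * (s * ℓ i v + β i) ≤ f 0 := by
          refine le_trans (mul_le_mul_of_nonneg_left ?_ (hc i hi).le) hterm_le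
          rw [hsv]
          exact le_max_right _ _
        have hs2 : (f 0 / c i - β i + 1) / ℓ i v ≤ s := le_max_right _ _
        have hs3 : f 0 / c i - β i + 1 ≤ s * ℓ i v := by
          rw [div_le_iff₀ hpos] at hs2; linarith
        have hcd : c i * (f 0 / c i) = f 0 := mul_div_cancel₀ _ (ne_of_gt (hc i hi))
        nlinarith [hc i hi]
      by_cases hall : ∀ i ∈ J, ℓ i v = 0
      · -- lineality direction: reduce dimension
        have hrk : finrank ℝ ((Submodule.span ℝ {v})ᗮ) + 1 = finrank ℝ E := by
          have h1 := Submodule.finrank_add_finrank_orthogonal (K := Submodule.span ℝ {v}) (𝕜 := ℝ)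
          rw [finrank_span_singleton hv_ne] at h1
          omega
        have hle : finrank ℝ ((Submodule.span ℝ {v})ᗮ) + J.card ≤ N := by omega
        obtain ⟨x₀, hx₀⟩ := IH ((Submodule.span ℝ {v})ᗮ) ι J
          (A.comp (Submodule.span ℝ {v})ᗮ.subtypeL)
          (fun i => (ℓ i).comp (Submodule.span ℝ {v})ᗮ.subtypeL) β c hc hle
        -- invariance of f along v
        have finv : ∀ (w : E) (t : ℝ), f (w + t • v) = f w := by
          intro w t
          rw [hf]; unfold fval
          have hA : A (w + t • v) = A w := by
            rw [map_add, map_smul, hAv, smul_zero, add_zero]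
          rw [hA]
          congr 1
          refine Finset.sum_congr rfl fun i hi => ?_
          have : ℓ i (w + t • v) = ℓ i w := by
            rw [map_add, map_smul, hall i hi, smul_zero, add_zero]
          rw [this]
        refine ⟨(x₀ : E), fun x => ?_⟩
        have hproj : x - (inner ℝ v x : ℝ) • v ∈ (Submodule.span ℝ {v})ᗮ := by
          rw [Submodule.mem_orthogonal_singleton_iff_inner_right]
          rw [inner_sub_right, real_inner_smul_right, real_inner_self_eq_norm_sq, hv_norm]
          ring
        have h1 : f x = f (x - (inner ℝ v x : ℝ) • v) := by
          have hxeq : x = (x - (inner ℝ v x : ℝ) • v) + (inner ℝ v x : ℝ) • v := by abel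
          calc f x = f ((x - (inner ℝ v x : ℝ) • v) + (inner ℝ v x : ℝ) • v) := by rw [← hxeq]
            _ = f (x - (inner ℝ v x : ℝ) • v) := finv _ _
        have h2 : fval (A.comp (Submodule.span ℝ {v})ᗮ.subtypeL) J
            (fun i => (ℓ i).comp (Submodule.span ℝ {v})ᗮ.subtypeL) β c
            (⟨x - (inner ℝ v x : ℝ) • v, hproj⟩ : (Submodule.span ℝ {v})ᗮ)
            = f (x - (inner ℝ v x : ℝ) • v) := rfl
        have h3 : fval (A.comp (Submodule.span ℝ {v})ᗮ.subtypeL) J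
            (fun i => (ℓ i).comp (Submodule.span ℝ {v})ᗮ.subtypeL) β c x₀ = f (x₀ : E) := rfl
        calc f (x₀ : E) = _ := h3.symm
          _ ≤ fval (A.comp (Submodule.span ℝ {v})ᗮ.subtypeL) J
              (fun i => (ℓ i).comp (Submodule.span ℝ {v})ᗮ.subtypeL) β c
              (⟨x - (inner ℝ v x : ℝ) • v, hproj⟩ : (Submodule.span ℝ {v})ᗮ) := hx₀ _
          _ = f (x - (inner ℝ v x : ℝ) • v) := h2
          _ = f x := h1.symm
      · -- some term can be dropped
        push_neg at hall
        obtain ⟨i₀, hi₀J, hi₀⟩ := hall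
        set J' := J.filter (fun i => ℓ i v = 0) with hJ'
        have hi₀J' : i₀ ∈ J \ J' := by
          rw [Finset.mem_sdiff, hJ', Finset.mem_filter]
          exact ⟨hi₀J, fun h => hi₀ h.2⟩
        have hcard : J'.card < J.card :=
          Finset.card_lt_card ⟨Finset.filter_subset _ _, fun h =>
            (Finset.mem_sdiff.mp hi₀J').2 (h (Finset.mem_sdiff.mp hi₀J').1)⟩
        have hle : finrank ℝ E + J'.card ≤ N := by omega
        obtain ⟨x₀, hx₀⟩ := IH E ι J' A ℓ β c
          (fun i hi => hc i (Finset.filter_subset _ _ hi)) hle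
        set g := fval A J' ℓ β c with hg
        -- choose s₀
        have hne : (J \ J').Nonempty := ⟨i₀, hi₀J'⟩
        have hneg : ∀ i ∈ J \ J', ℓ i v < 0 := by
          intro i hi
          rw [Finset.mem_sdiff, hJ', Finset.mem_filter] at hi
          rcases (hlv i hi.1).lt_or_eq with h | h
          · exact h
          · exact absurd ⟨hi.1, h⟩ hi.2
        set s₀ := max 0 ((J \ J').sup' hne fun i => (ℓ i x₀ + β i) / (-ℓ i v)) with hs₀
        have hs₀0 : (0:ℝ) ≤ s₀ := le_max_left _ _
        have hdrop : ∀ i ∈ J \ J', ℓ i x₀ + β i + s₀ * ℓ i v ≤ 0 := by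
          intro i hi
          have h1 : (ℓ i x₀ + β i) / (-ℓ i v) ≤ s₀ :=
            le_trans (Finset.le_sup' (f := fun i => (ℓ i x₀ + β i) / (-ℓ i v)) hi)
              (le_max_right _ _)
          have h2 : 0 < -ℓ i v := by linarith [hneg i hi]
          rw [div_le_iff₀ h2] at h1
          nlinarith
        refine ⟨x₀ + s₀ • v, fun x => ?_⟩
        -- f (x₀ + s₀ • v) = g x₀
        have hsplit : ∀ w : E, f w = (1/2) * ‖A w‖^2 + (∑ i ∈ J', c i * max 0 (ℓ i w + β i))
            + ∑ i ∈ J.filter (fun i => ¬ ℓ i v = 0), c i * max 0 (ℓ i w + β i) := by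
          intro w
          rw [hf]; unfold fval
          rw [← Finset.sum_filter_add_sum_filter_not J (fun i => ℓ i v = 0)
            (fun i => c i * max 0 (ℓ i w + β i))]
          rw [hJ']; ring
        have hfilter_eq : J.filter (fun i => ¬ ℓ i v = 0) = J \ J' := by
          rw [hJ']
          ext i
          simp [Finset.mem_filter, Finset.mem_sdiff]
          tauto
        have hfxstar : f (x₀ + s₀ • v) = g x₀ := by
          rw [hsplit, hfilter_eq]
          have hA : A (x₀ + s₀ • v) = A x₀ := by
            rw [map_add, map_smul, hAv, smul_zero, add_zero]
          rw [hA]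
          have h1 : ∑ i ∈ J', c i * max 0 (ℓ i (x₀ + s₀ • v) + β i)
              = ∑ i ∈ J', c i * max 0 (ℓ i x₀ + β i) := by
            refine Finset.sum_congr rfl fun i hi => ?_
            rw [hJ', Finset.mem_filter] at hi
            rw [map_add, map_smul]
            simp [hi.2]
          have h2 : ∑ i ∈ J \ J', c i * max 0 (ℓ i (x₀ + s₀ • v) + β i) = 0 := by
            refine Finset.sum_eq_zero fun i hi => ?_
            have : ℓ i (x₀ + s₀ • v) + β i ≤ 0 := by
              rw [map_add, map_smul]
              have := hdrop i hi
              simp only [smul_eq_mul]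
              linarith
            rw [max_eq_left this, mul_zero]
          rw [h1, h2, add_zero]
          rfl
        have hgle : ∀ w : E, g w ≤ f w := by
          intro w
          rw [hsplit, hfilter_eq, hg]
          unfold fval
          have : 0 ≤ ∑ i ∈ J \ J', c i * max 0 (ℓ i w + β i) :=
            Finset.sum_nonneg fun i hi =>
              mul_nonneg (hc i (Finset.mem_sdiff.mp hi).1).le (le_max_left _ _)
          linarith
        calc f (x₀ + s₀ • v) = g x₀ := hfxstar
          _ ≤ g x := hx₀ x
          _ ≤ f x := hgle x
end

noncomputable section AppDefs
open Module Matrix Finset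

def zvec {d : ℕ} (p : EuclideanSpace ℝ (Fin (d+1))) : Fin d → ℝ := fun t => p t.castSucc

def dotLin (d : ℕ) (w : Fin (d+1) → ℝ) : EuclideanSpace ℝ (Fin (d+1)) →ₗ[ℝ] ℝ where
  toFun p := ∑ t, w t * p t
  map_add' p q := by
    simp only [PiLp.add_apply, mul_add, Finset.sum_add_distrib]
  map_smul' a p := by
    simp only [PiLp.smul_apply, smul_eq_mul, RingHom.id_apply, Finset.mul_sum]
    exact Finset.sum_congr rfl fun t _ => by ring

lemma dotLin_apply (d : ℕ) (w : Fin (d+1) → ℝ) (p : EuclideanSpace ℝ (Fin (d+1))) :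
    dotLin d w p = ∑ t, w t * p t := rfl

def qmap (d : ℕ) (S : Matrix (Fin d) (Fin d) ℝ) :
    EuclideanSpace ℝ (Fin (d+1)) →ₗ[ℝ] EuclideanSpace ℝ (Fin d) where
  toFun p := WithLp.toLp 2 (fun j => ∑ t, S j t * p t.castSucc : Fin d → ℝ)
  map_add' p q := by
    ext j
    simp only [PiLp.add_apply, mul_add, Finset.sum_add_distrib]
  map_smul' a p := by
    ext j
    simp only [PiLp.smul_apply, smul_eq_mul, RingHom.id_apply, Finset.mul_sum]
    exact Finset.sum_congr rfl fun t _ => by ring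

lemma qmap_apply (d : ℕ) (S : Matrix (Fin d) (Fin d) ℝ) (p : EuclideanSpace ℝ (Fin (d+1)))
    (j : Fin d) : qmap d S p j = S.mulVec (zvec p) j := by
  rfl

lemma dot_snoc (d : ℕ) (a : Fin d → ℝ) (b : ℝ) (p : EuclideanSpace ℝ (Fin (d+1))) :
    (∑ t, (Fin.snoc a b : Fin (d+1) → ℝ) t * p t)
      = (∑ t, a t * zvec p t) + b * p (Fin.last d) := by
  rw [Fin.sum_univ_castSucc]
  simp [Fin.snoc_castSucc, Fin.snoc_last, zvec]

lemma max_add_max_neg (a : ℝ) : max 0 a + max 0 (-a) = |a| := by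
  rcases le_total 0 a with h | h
  · rw [max_eq_right h, max_eq_left (by linarith : -a ≤ 0), abs_of_nonneg h, add_zero]
  · rw [max_eq_left h, max_eq_right (by linarith : 0 ≤ -a), abs_of_nonpos h, zero_add]

end AppDefs

noncomputable section MainApp
open Module Matrix Finset

def svmW (d k m : ℕ) (V : Matrix (Fin k) (Fin d) ℝ) (r : Fin m → Fin d → ℝ) (y : Fin m → ℝ) :
    (Fin k ⊕ (Fin k ⊕ Fin m)) → Fin (d+1) → ℝ :=
  Sum.elim (fun j => Fin.snoc (fun t => V j t) 0)
    (Sum.elim (fun j => Fin.snoc (fun t => -V j t) 0)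
      (fun i => Fin.snoc (fun t => -(y i * r i t)) (-y i)))

def svmB (d k m : ℕ) : (Fin k ⊕ (Fin k ⊕ Fin m)) → ℝ :=
  Sum.elim (fun _ => 0) (Sum.elim (fun _ => 0) (fun _ => 1))

def svmC (d k m : ℕ) (lam mu : ℝ) : (Fin k ⊕ (Fin k ⊕ Fin m)) → ℝ :=
  Sum.elim (fun _ => lam) (Sum.elim (fun _ => lam) (fun _ => mu))

open scoped MatrixOrder in
def Matrix.PosSemidef.sqrt {d : ℕ} {G : Matrix (Fin d) (Fin d) ℝ} (_hG : G.PosSemidef) :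
    Matrix (Fin d) (Fin d) ℝ := CFC.sqrt G

open scoped MatrixOrder in
lemma Matrix.PosSemidef.sq_sqrt {d : ℕ} {G : Matrix (Fin d) (Fin d) ℝ} (hG : G.PosSemidef) :
    hG.sqrt ^ 2 = G := CFC.sq_sqrt G hG.nonneg

open scoped MatrixOrder in
lemma Matrix.PosSemidef.posSemidef_sqrt {d : ℕ} {G : Matrix (Fin d) (Fin d) ℝ}
    (hG : G.PosSemidef) : hG.sqrt.PosSemidef := (CFC.sqrt_nonneg G).posSemidef

lemma svm_quad (d : ℕ) (G : Matrix (Fin d) (Fin d) ℝ) (hG : G.PosSemidef) (z : Fin d → ℝ) :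
    (hG.sqrt.mulVec z) ⬝ᵥ (hG.sqrt.mulVec z) = z ⬝ᵥ G.mulVec z := by
  have hSS : hG.sqrt * hG.sqrt = G := by have h := hG.sq_sqrt; rwa [pow_two] at h
  have hsym : hG.sqrtᵀ = hG.sqrt := by
    have h : hG.sqrtᴴ = hG.sqrt := hG.posSemidef_sqrt.1
    calc hG.sqrtᵀ = hG.sqrtᴴ := by
          ext i j
          simp [Matrix.conjTranspose_apply]
      _ = hG.sqrt := h
  have h2 : z ᵥ* hG.sqrt = hG.sqrt *ᵥ z := by
    conv_rhs => rw [← hsym]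
    rw [Matrix.mulVec_transpose]
  calc hG.sqrt *ᵥ z ⬝ᵥ hG.sqrt *ᵥ z = (z ᵥ* hG.sqrt) ⬝ᵥ (hG.sqrt *ᵥ z) := by rw [h2]
    _ = z ⬝ᵥ (hG.sqrt *ᵥ (hG.sqrt *ᵥ z)) := (dotProduct_mulVec _ _ _).symm
    _ = z ⬝ᵥ G *ᵥ z := by rw [Matrix.mulVec_mulVec, hSS]

lemma svm_fval_eq (d k m : ℕ) (G : Matrix (Fin d) (Fin d) ℝ) (hG : G.PosSemidef)
    (V : Matrix (Fin k) (Fin d) ℝ) (r : Fin m → Fin d → ℝ) (y : Fin m → ℝ) (lam mu : ℝ)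
    (p : EuclideanSpace ℝ (Fin (d+1))) :
    fval (LinearMap.toContinuousLinearMap (qmap d hG.sqrt)) Finset.univ
      (fun i => LinearMap.toContinuousLinearMap (dotLin d (svmW d k m V r y i)))
      (svmB d k m) (svmC d k m lam mu) p
    = (1/2) * (zvec p ⬝ᵥ G.mulVec (zvec p)) + lam * (∑ j, |V.mulVec (zvec p) j|)
      + mu * ∑ i, max 0 (1 - y i * (zvec p ⬝ᵥ r i + p (Fin.last d))) := by
  unfold fval
  have hquad : (‖(LinearMap.toContinuousLinearMap (qmap d hG.sqrt)) p‖ : ℝ)^2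
      = zvec p ⬝ᵥ G.mulVec (zvec p) := by
    rw [EuclideanSpace.norm_eq, Real.sq_sqrt (by positivity)]
    rw [← svm_quad d G hG (zvec p), dotProduct]
    refine Finset.sum_congr rfl fun j _ => ?_
    have hA : (LinearMap.toContinuousLinearMap (qmap d hG.sqrt)) p j
        = hG.sqrt.mulVec (zvec p) j := by
      rw [LinearMap.coe_toContinuousLinearMap']
      exact qmap_apply d hG.sqrt p j
    rw [hA, Real.norm_eq_abs, sq_abs, sq]
  rw [hquad]
  have hsum : ∑ i : (Fin k ⊕ (Fin k ⊕ Fin m)),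
      svmC d k m lam mu i * max 0
        ((LinearMap.toContinuousLinearMap (dotLin d (svmW d k m V r y i))) p + svmB d k m i)
      = lam * (∑ j, |V.mulVec (zvec p) j|)
        + mu * ∑ i, max 0 (1 - y i * (zvec p ⬝ᵥ r i + p (Fin.last d))) := by
    rw [Fintype.sum_sum_type, Fintype.sum_sum_type]
    have e1 : ∀ j : Fin k,
        svmC d k m lam mu (Sum.inl j) * max 0
          ((LinearMap.toContinuousLinearMap (dotLin d (svmW d k m V r y (Sum.inl j)))) p
            + svmB d k m (Sum.inl j))
        = lam * max 0 (V.mulVec (zvec p) j) := by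
      intro j
      rw [LinearMap.coe_toContinuousLinearMap', dotLin_apply]
      simp only [svmC, svmB, svmW, Sum.elim_inl]
      rw [dot_snoc]
      simp only [zero_mul, add_zero]
      congr 2
    have e2 : ∀ j : Fin k,
        svmC d k m lam mu (Sum.inr (Sum.inl j)) * max 0
          ((LinearMap.toContinuousLinearMap (dotLin d (svmW d k m V r y (Sum.inr (Sum.inl j))))) p
            + svmB d k m (Sum.inr (Sum.inl j)))
        = lam * max 0 (-(V.mulVec (zvec p) j)) := by
      intro j
      rw [LinearMap.coe_toContinuousLinearMap', dotLin_apply]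
      simp only [svmC, svmB, svmW, Sum.elim_inl, Sum.elim_inr]
      rw [dot_snoc]
      simp only [zero_mul, add_zero]
      congr 2
      have hm : (V *ᵥ zvec p) j = ∑ t, V j t * zvec p t := rfl
      rw [hm, ← Finset.sum_neg_distrib]
      exact Finset.sum_congr rfl fun t _ => by ring
    have e3 : ∀ i : Fin m,
        svmC d k m lam mu (Sum.inr (Sum.inr i)) * max 0
          ((LinearMap.toContinuousLinearMap (dotLin d (svmW d k m V r y (Sum.inr (Sum.inr i))))) p
            + svmB d k m (Sum.inr (Sum.inr i)))
        = mu * max 0 (1 - y i * (zvec p ⬝ᵥ r i + p (Fin.last d))) := by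
      intro i
      rw [LinearMap.coe_toContinuousLinearMap', dotLin_apply]
      simp only [svmC, svmB, svmW, Sum.elim_inr]
      rw [dot_snoc]
      congr 2
      have h1 : ∑ t, -(y i * r i t) * zvec p t = -(y i * (zvec p ⬝ᵥ r i)) := by
        rw [dotProduct, Finset.mul_sum, ← Finset.sum_neg_distrib]
        exact Finset.sum_congr rfl fun t _ => by ring
      rw [h1]
      ring
    rw [Finset.sum_congr rfl (fun j _ => e1 j), Finset.sum_congr rfl (fun j _ => e2 j),
      Finset.sum_congr rfl (fun i _ => e3 i)]
    have habs : ∑ j, lam * max 0 (V.mulVec (zvec p) j) + ∑ j, lam * max 0 (-(V.mulVec (zvec p) j))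
        = lam * ∑ j, |V.mulVec (zvec p) j| := by
      rw [← Finset.sum_add_distrib, Finset.mul_sum]
      refine Finset.sum_congr rfl fun j _ => ?_
      rw [← max_add_max_neg (V.mulVec (zvec p) j)]
      ring
    have hmu' : ∑ i, mu * max 0 (1 - y i * (zvec p ⬝ᵥ r i + p (Fin.last d)))
        = mu * ∑ i, max 0 (1 - y i * (zvec p ⬝ᵥ r i + p (Fin.last d))) :=
      (Finset.mul_sum _ _ _).symm
    linarith [habs, hmu']
  rw [hsum]
  ring

end MainApp

open Matrix Finset

/-- The soft-margin ℓ1-regularized quadratic surface SVM is always feasible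
and attains its minimum. -/
theorem l1_sqssvm_solution_existence (d m k : ℕ)
    (G : Matrix (Fin d) (Fin d) ℝ) (hG : G.PosSemidef)
    (V : Matrix (Fin k) (Fin d) ℝ)
    (r : Fin m → Fin d → ℝ) (y : Fin m → ℝ)
    (hy : ∀ i, y i = 1 ∨ y i = -1)
    (lam mu : ℝ) (hlam : 0 < lam) (hmu : 0 < mu)
    (obj : (Fin d → ℝ) → ℝ → (Fin m → ℝ) → ℝ)
    (hobj : obj = fun z c xi =>
      (1 / 2) * (z ⬝ᵥ G.mulVec z) + lam * (∑ j, |V.mulVec z j|) + mu * ∑ i, xi i)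
    (Feas : (Fin d → ℝ) → ℝ → (Fin m → ℝ) → Prop)
    (hFeas : Feas = fun z c xi =>
      (∀ i, 0 ≤ xi i) ∧ ∀ i, 1 - xi i ≤ y i * (z ⬝ᵥ r i + c)) :
    ∃ z c xi, Feas z c xi ∧
      ∀ z' c' xi', Feas z' c' xi' → obj z c xi ≤ obj z' c' xi' := by
  classical
  subst hobj
  subst hFeas
  have hcpos : ∀ i ∈ (Finset.univ : Finset (Fin k ⊕ (Fin k ⊕ Fin m))),
      0 < svmC d k m lam mu i := by
    rintro (j | j | i) _ <;> simpa [svmC] using by assumption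
  obtain ⟨p₀, hp₀⟩ := fval_attains_min (F := EuclideanSpace ℝ (Fin d))
    (Module.finrank ℝ (EuclideanSpace ℝ (Fin (d+1)))
      + (Finset.univ : Finset (Fin k ⊕ (Fin k ⊕ Fin m))).card)
    (EuclideanSpace ℝ (Fin (d+1))) (Fin k ⊕ (Fin k ⊕ Fin m)) Finset.univ
    (LinearMap.toContinuousLinearMap (qmap d hG.sqrt))
    (fun i => LinearMap.toContinuousLinearMap (dotLin d (svmW d k m V r y i)))
    (svmB d k m) (svmC d k m lam mu) hcpos le_rfl
  refine ⟨zvec p₀, p₀ (Fin.last d),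
    fun i => max 0 (1 - y i * (zvec p₀ ⬝ᵥ r i + p₀ (Fin.last d))), ⟨?_, ?_⟩, ?_⟩
  · intro i
    exact le_max_left _ _
  · intro i
    have := le_max_right 0 (1 - y i * (zvec p₀ ⬝ᵥ r i + p₀ (Fin.last d)))
    linarith
  · intro z' c' xi' hf'
    obtain ⟨hxi0, hxi1⟩ := hf'
    set p' : EuclideanSpace ℝ (Fin (d+1)) :=
      (WithLp.equiv 2 (Fin (d+1) → ℝ)).symm (Fin.snoc z' c') with hp'
    have hz' : zvec p' = z' := by
      funext t
      simp [hp', zvec, WithLp.equiv_symm_apply, PiLp.toLp_apply, Fin.snoc_castSucc]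
    have hc' : p' (Fin.last d) = c' := by
      simp [hp', WithLp.equiv_symm_apply, PiLp.toLp_apply, Fin.snoc_last]
    have h1 := (svm_fval_eq d k m G hG V r y lam mu p₀).symm
    have h2 := hp₀ p'
    have h3 := svm_fval_eq d k m G hG V r y lam mu p'
    rw [hz', hc'] at h3
    have h4 : mu * ∑ i, max 0 (1 - y i * (z' ⬝ᵥ r i + c')) ≤ mu * ∑ i, xi' i := by
      refine mul_le_mul_of_nonneg_left ?_ hmu.le
      refine Finset.sum_le_sum fun i _ => ?_
      exact max_le (hxi0 i) (by linarith [hxi1 i])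
    simp only []
    linarith [h1, h2, h3, h4]
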